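/- Let T < 0 be a real number and let n and q be nonnegative integers with n > 2q + 8. Define c_q = ∫_0^∞ (1+(t−T)²)^{(5+2q−n)/2} dt and c_{q+1} = ∫_0^∞ (1+(t−T)²)^{(5+2(q+1)−n)/2} dt. Then (1+T²) · (n−2q−7)/(n−2q−8) ≤ c_{q+1}/c_q ≤ (1+T²) · (n−2q−6)/(n−2q−8). -/

import Mathlib

open MeasureTheory

open Set Filter Real Topology
lemma aux_cont (T r : ℝ) : Continuous fun t : ℝ => (1 + (t - T) ^ 2) ^ r := by
  apply Continuous.rpow_const (by continuity)
  intro x; left; positivity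

lemma aux_int (T r : ℝ) (hT : T < 0) (hr : r ≤ -1) :
    IntegrableOn (fun t : ℝ => (1 + (t - T) ^ 2) ^ r) (Set.Ioi 0) := by
  rw [show Set.Ioi (0:ℝ) = Set.Ioc 0 1 ∪ Set.Ioi 1 from (Set.Ioc_union_Ioi_eq_Ioi zero_le_one).symm]
  refine IntegrableOn.union ?_ ?_
  · exact ((aux_cont T r).integrableOn_Icc (a := 0) (b := 1)).mono_set Set.Ioc_subset_Icc_self
  · refine (integrableOn_Ioi_rpow_of_lt (show 2*r < -1 by linarith) one_pos).mono'
      ((aux_cont T r).aestronglyMeasurable.restrict) ?_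
    filter_upwards [ae_restrict_mem measurableSet_Ioi] with t ht
    have ht1 : (1:ℝ) < t := ht
    have htT : 0 < t - T := by linarith
    rw [Real.norm_eq_abs, abs_of_nonneg (Real.rpow_nonneg (by positivity) _)]
    have h2 : t ^ (2*r) = (t ^ (2:ℕ)) ^ r := by
      rw [← Real.rpow_natCast t 2, ← Real.rpow_mul (by linarith)]
      norm_num
    rw [h2]
    refine Real.rpow_le_rpow_of_nonpos (by positivity) ?_ (by linarith)
    nlinarith

lemma aux_dsq (T t : ℝ) : HasDerivAt (fun t : ℝ => 1 + (t - T) ^ 2) (2 * (t - T)) t := by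
  have h := (((hasDerivAt_id t).sub_const T).pow 2).const_add 1
  simpa using h

lemma aux_rpow_deriv (T r t : ℝ) :
    HasDerivAt (fun t : ℝ => (1 + (t - T) ^ 2) ^ r)
      (r * (1 + (t - T) ^ 2) ^ (r - 1) * (2 * (t - T))) t := by
  have h := (aux_dsq T t).rpow_const (p := r) (Or.inl (by positivity))
  convert h using 1; ring

lemma aux_split (x α : ℝ) (hx : 0 < x) : x ^ (1 - α) = x * x ^ (-α) := by
  rw [show (1:ℝ) - α = 1 + (-α) by ring, Real.rpow_add hx, Real.rpow_one]

lemma aux_dN (T α t : ℝ) :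
    HasDerivAt (fun t : ℝ => (t - T) * (1 + (t - T) ^ 2) ^ (1 - α))
      ((1 + (3 - 2*α) * (t - T) ^ 2) * (1 + (t - T) ^ 2) ^ (-α)) t := by
  have h := ((hasDerivAt_id t).sub_const T).mul (aux_rpow_deriv T (1-α) t)
  refine h.congr_deriv ?_
  have hx : (0:ℝ) < 1 + (t - T)^2 := by positivity
  simp only [id_eq]
  rw [show (1:ℝ) - α - 1 = -α by ring, aux_split _ α hx]
  ring

lemma aux_base_atTop (T : ℝ) : Tendsto (fun t : ℝ => 1 + (t - T) ^ 2) atTop atTop := by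
  apply tendsto_atTop_add_const_left
  have h1 : Tendsto (fun t : ℝ => t - T) atTop atTop := tendsto_atTop_add_const_right _ (-T) (by exact tendsto_id)
  exact (tendsto_pow_atTop two_ne_zero).comp (by simpa [sub_eq_add_neg] using h1)

lemma aux_tendsto (T r : ℝ) (hr : r < 0) :
    Tendsto (fun t : ℝ => (1 + (t - T) ^ 2) ^ r) atTop (𝓝 0) := by
  have h := (tendsto_rpow_neg_atTop (y := -r) (by linarith)).comp (aux_base_atTop T)
  simpa [Function.comp_def] using h

lemma aux_le_sqrt (u : ℝ) (hu : 0 ≤ u) : u ≤ (1 + u ^ 2) ^ ((1:ℝ)/2) := by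
  have h1 : u = (u ^ (2:ℕ)) ^ ((1:ℝ)/2) := by
    rw [← Real.rpow_natCast u 2, ← Real.rpow_mul hu]; norm_num
  rw [h1]
  exact Real.rpow_le_rpow (by positivity) (by nlinarith) (by norm_num)

lemma aux_mul_le (T α t : ℝ) (ht : 0 ≤ t - T) :
    (t - T) * (1 + (t - T) ^ 2) ^ (-α) ≤ (1 + (t - T) ^ 2) ^ ((1:ℝ)/2 - α) := by
  have hx : (0:ℝ) < 1 + (t - T) ^ 2 := by positivity
  rw [show (1:ℝ)/2 - α = 1/2 + (-α) by ring, Real.rpow_add hx]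
  exact mul_le_mul_of_nonneg_right (aux_le_sqrt _ ht) (Real.rpow_nonneg hx.le _)

lemma aux_tendsto_N (T α : ℝ) (hα : 2 ≤ α) :
    Tendsto (fun t : ℝ => (t - T) * (1 + (t - T) ^ 2) ^ (1 - α)) atTop (𝓝 0) := by
  apply squeeze_zero' (g := fun t : ℝ => (1 + (t - T) ^ 2) ^ ((3:ℝ)/2 - α))
  · filter_upwards [eventually_ge_atTop T] with t ht
    have hx : (0:ℝ) < 1 + (t - T) ^ 2 := by positivity
    exact mul_nonneg (by linarith) (Real.rpow_nonneg hx.le _)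
  · filter_upwards [eventually_ge_atTop T] with t ht
    have hx : (0:ℝ) < 1 + (t - T) ^ 2 := by positivity
    have := aux_mul_le T (α - 1) t (by linarith)
    rw [show (1:ℝ) - α = -(α-1) by ring, show (3:ℝ)/2 - α = 1/2 - (α-1) by ring]
    exact this
  · exact aux_tendsto T _ (by linarith)

lemma aux_int_N' (T α : ℝ) (hT : T < 0) (hα : 2 ≤ α) :
    IntegrableOn (fun t : ℝ => (t - T) * (1 + (t - T) ^ 2) ^ (-α)) (Set.Ioi 0) := by
  refine (aux_int T (1/2 - α) hT (by linarith)).mono'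
    (((continuous_id.sub continuous_const).mul (aux_cont T (-α))).aestronglyMeasurable.restrict) ?_
  filter_upwards [ae_restrict_mem measurableSet_Ioi] with t ht
  have ht0 : (0:ℝ) < t := ht
  have hu : 0 < t - T := by linarith
  rw [Real.norm_eq_abs, abs_of_nonneg (mul_nonneg hu.le (Real.rpow_nonneg (by positivity) _))]
  exact aux_mul_le T α t hu.le

/-- the IBP identity -/
lemma aux_id (T α : ℝ) (hT : T < 0) (hα : 2 ≤ α) :
    (2*α - 3) * (∫ t in Set.Ioi (0:ℝ), (1 + (t - T) ^ 2) ^ (1 - α))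
      = (2*α - 2) * (∫ t in Set.Ioi (0:ℝ), (1 + (t - T) ^ 2) ^ (-α))
        - T * (1 + T ^ 2) ^ (1 - α) := by
  have hpt : ∀ t : ℝ, (1 + (3 - 2*α) * (t - T) ^ 2) * (1 + (t - T) ^ 2) ^ (-α)
      = (3 - 2*α) * (1 + (t - T) ^ 2) ^ (1 - α) + (2*α - 2) * (1 + (t - T) ^ 2) ^ (-α) := by
    intro t
    rw [aux_split _ α (by positivity)]
    ring
  have h1 : IntegrableOn (fun t : ℝ => (3 - 2*α) * (1 + (t - T) ^ 2) ^ (1 - α)) (Set.Ioi 0) :=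
    (aux_int T (1 - α) hT (by linarith)).const_mul _
  have h2 : IntegrableOn (fun t : ℝ => (2*α - 2) * (1 + (t - T) ^ 2) ^ (-α)) (Set.Ioi 0) :=
    (aux_int T (-α) hT (by linarith)).const_mul _
  have hint : IntegrableOn
      (fun t : ℝ => (1 + (3 - 2*α) * (t - T) ^ 2) * (1 + (t - T) ^ 2) ^ (-α)) (Set.Ioi 0) := by
    simp only [hpt]; exact h1.add h2
  have key := integral_Ioi_of_hasDerivAt_of_tendsto' (a := 0)
    (f := fun t : ℝ => (t - T) * (1 + (t - T) ^ 2) ^ (1 - α))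
    (fun t _ => aux_dN T α t) hint (aux_tendsto_N T α hα)
  simp only [hpt] at key
  rw [integral_add h1 h2, integral_const_mul, integral_const_mul] at key
  have hN0 : (0 - T) * (1 + (0 - T) ^ 2) ^ (1 - α) = -T * (1 + T ^ 2) ^ (1 - α) := by
    rw [zero_sub, neg_sq]
  rw [hN0] at key
  linarith

/-- FTC bound A : upper bound for the tail integral -/
lemma aux_A (T α : ℝ) (hT : T < 0) (hα : 2 ≤ α) :
    (-T) * (∫ t in Set.Ioi (0:ℝ), (1 + (t - T) ^ 2) ^ (-α))
      ≤ (1 + T ^ 2) ^ (1 - α) / (2 * (α - 1)) := by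
  have hα1 : (0:ℝ) < α - 1 := by linarith
  -- FTC
  have hder : ∀ t : ℝ, HasDerivAt
      (fun t : ℝ => (-(1:ℝ)/(2*(α-1))) * (1 + (t - T) ^ 2) ^ (1 - α))
      ((t - T) * (1 + (t - T) ^ 2) ^ (-α)) t := by
    intro t
    have h := (aux_rpow_deriv T (1-α) t).const_mul (-(1:ℝ)/(2*(α-1)))
    refine h.congr_deriv ?_
    rw [show (1:ℝ) - α - 1 = -α by ring]
    field_simp
    ring
  have htd : Tendsto (fun t : ℝ => (-(1:ℝ)/(2*(α-1))) * (1 + (t - T) ^ 2) ^ (1 - α))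
      atTop (𝓝 0) := by
    have := (aux_tendsto T (1-α) (by linarith)).const_mul (-(1:ℝ)/(2*(α-1)))
    simpa using this
  have key := integral_Ioi_of_hasDerivAt_of_tendsto' (a := 0)
    (fun t _ => hder t) (aux_int_N' T α hT hα) htd
  have hmono : ∫ t in Set.Ioi (0:ℝ), (-T) * (1 + (t - T) ^ 2) ^ (-α)
      ≤ ∫ t in Set.Ioi (0:ℝ), (t - T) * (1 + (t - T) ^ 2) ^ (-α) := by
    refine setIntegral_mono_on ((aux_int T (-α) hT (by linarith)).const_mul _)
      (aux_int_N' T α hT hα) measurableSet_Ioi ?_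
    intro t ht
    have ht0 : (0:ℝ) < t := ht
    exact mul_le_mul_of_nonneg_right (by linarith) (Real.rpow_nonneg (by positivity) _)
  rw [integral_const_mul] at hmono
  rw [key] at hmono
  have h0 : (0:ℝ) - -(1:ℝ)/(2*(α-1)) * (1 + (0 - T) ^ 2) ^ (1 - α)
      = (1 + T ^ 2) ^ (1 - α) / (2 * (α - 1)) := by
    rw [show ((0:ℝ)-T)^2 = T^2 by ring]
    ring
  rw [h0] at hmono
  exact hmono

/-- FTC bound B : lower bound for the tail integral -/
lemma aux_B (T α : ℝ) (hT : T < 0) (hα : 2 ≤ α) :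
    (-T) * (1 + T ^ 2) ^ (1 - α)
      ≤ (1 + (2*α - 1) * T ^ 2) * (∫ t in Set.Ioi (0:ℝ), (1 + (t - T) ^ 2) ^ (-α)) := by
  set φ : ℝ → ℝ := fun t =>
    ((2*α-1)^2*(t-T)^4 + 4*(α-1)*(t-T)^2 - 1) * (1 + (t-T)^2) ^ (-α)
      / (1 + (2*α-1)*(t-T)^2)^2 with hφ
  have hDpos : ∀ t : ℝ, 0 < 1 + (2*α-1)*(t-T)^2 := by
    intro t; nlinarith [sq_nonneg (t-T)]
  have hD : ∀ t : ℝ, HasDerivAt (fun t : ℝ => 1 + (2*α-1)*(t-T)^2) (2*(2*α-1)*(t-T)) t := by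
    intro t
    have h := ((((hasDerivAt_id t).sub_const T).pow 2).const_mul (2*α-1)).const_add 1
    refine h.congr_deriv ?_
    simp only [id_eq]
    ring
  have hΦ : ∀ t : ℝ, HasDerivAt
      (fun t : ℝ => -((t-T)*(1+(t-T)^2)^(1-α) / (1 + (2*α-1)*(t-T)^2))) (φ t) t := by
    intro t
    have h := ((aux_dN T α t).div (hD t) (hDpos t).ne').neg
    refine h.congr_deriv ?_
    have hx : (0:ℝ) < 1 + (t-T)^2 := by positivity
    rw [hφ]
    simp only
    rw [aux_split _ α hx]
    have hd := (hDpos t).ne'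
    field_simp
    ring
  have hEbound : ∀ t : ℝ,
      |(2*α-1)^2*(t-T)^4 + 4*(α-1)*(t-T)^2 - 1| ≤ (1 + (2*α-1)*(t-T)^2)^2 := by
    intro t
    rw [abs_le]
    constructor
    · nlinarith [sq_nonneg (t-T), sq_nonneg ((t-T)^2)]
    · nlinarith [sq_nonneg (t-T), sq_nonneg ((t-T)^2)]
  have hφle : ∀ t : ℝ, φ t ≤ (1 + (t-T)^2) ^ (-α) := by
    intro t
    have hP : (0:ℝ) ≤ (1 + (t-T)^2) ^ (-α) := Real.rpow_nonneg (by positivity) _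
    have hD2 : (0:ℝ) < (1 + (2*α-1)*(t-T)^2)^2 := pow_pos (hDpos t) 2
    rw [hφ]
    simp only
    rw [div_le_iff₀ hD2]
    have hE : (2*α-1)^2*(t-T)^4 + 4*(α-1)*(t-T)^2 - 1 ≤ (1 + (2*α-1)*(t-T)^2)^2 :=
      (abs_le.mp (hEbound t)).2
    nlinarith [mul_le_mul_of_nonneg_right hE hP]
  have hφabs : ∀ t : ℝ, ‖φ t‖ ≤ (1 + (t-T)^2) ^ (-α) := by
    intro t
    have hP : (0:ℝ) ≤ (1 + (t-T)^2) ^ (-α) := Real.rpow_nonneg (by positivity) _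
    have hD2 : (0:ℝ) < (1 + (2*α-1)*(t-T)^2)^2 := pow_pos (hDpos t) 2
    rw [hφ]
    simp only
    rw [Real.norm_eq_abs, abs_div, abs_mul, abs_of_nonneg hP, abs_of_nonneg hD2.le,
      div_le_iff₀ hD2]
    nlinarith [mul_le_mul_of_nonneg_right (hEbound t) hP]
  have hφcont : Continuous φ := by
    apply Continuous.div
    · exact (by continuity : Continuous fun t:ℝ => (2*α-1)^2*(t-T)^4 + 4*(α-1)*(t-T)^2 - 1).mul
        (aux_cont T (-α))
    · continuity
    · intro t
      exact pow_ne_zero 2 (hDpos t).ne'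
  have hintφ : IntegrableOn φ (Set.Ioi 0) := by
    refine (aux_int T (-α) hT (by linarith)).mono' hφcont.aestronglyMeasurable.restrict ?_
    exact Eventually.of_forall hφabs
  have htdΦ : Tendsto (fun t : ℝ => -((t-T)*(1+(t-T)^2)^(1-α) / (1 + (2*α-1)*(t-T)^2)))
      atTop (𝓝 0) := by
    have hlow := (aux_tendsto_N T α hα).neg
    rw [neg_zero] at hlow
    refine tendsto_of_tendsto_of_tendsto_of_le_of_le' hlow tendsto_const_nhds ?_ ?_
    · filter_upwards [eventually_ge_atTop T] with t ht
      have hu : (0:ℝ) ≤ t - T := by linarith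
      have hN : (0:ℝ) ≤ (t-T)*(1+(t-T)^2)^(1-α) :=
        mul_nonneg hu (Real.rpow_nonneg (by positivity) _)
      have := div_le_self hN (by nlinarith [sq_nonneg (t-T)] :
        (1:ℝ) ≤ 1 + (2*α-1)*(t-T)^2)
      linarith
    · filter_upwards [eventually_ge_atTop T] with t ht
      have hu : (0:ℝ) ≤ t - T := by linarith
      have hN : (0:ℝ) ≤ (t-T)*(1+(t-T)^2)^(1-α) :=
        mul_nonneg hu (Real.rpow_nonneg (by positivity) _)
      have := div_nonneg hN (hDpos t).le
      linarith
  have key := integral_Ioi_of_hasDerivAt_of_tendsto' (a := 0)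
    (fun t _ => hΦ t) hintφ htdΦ
  have hmono : ∫ t in Set.Ioi (0:ℝ), φ t ≤ ∫ t in Set.Ioi (0:ℝ), (1 + (t-T)^2) ^ (-α) :=
    setIntegral_mono_on hintφ (aux_int T (-α) hT (by linarith)) measurableSet_Ioi
      (fun t _ => hφle t)
  rw [key] at hmono
  have h0 : (0:ℝ) - -((0-T)*(1+(0-T)^2)^(1-α) / (1 + (2*α-1)*(0-T)^2))
      = (-T) * (1+T^2)^(1-α) / (1 + (2*α-1)*T^2) := by
    rw [zero_sub T, neg_sq]
    ring
  rw [h0, div_le_iff₀ (by nlinarith [sq_nonneg T] : (0:ℝ) < 1 + (2*α-1)*T^2)] at hmono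
  linarith

/-- Bounds on the ratio `c_{q+1}/c_q` of the integrals
`c_q = ∫_0^∞ (1+(t−T)²)^{(5+2q−n)/2} dt` for `T < 0` and `n > 2q + 8`. -/
theorem cq_ratio_bounds (T : ℝ) (hT : T < 0) (n q : ℕ) (hn : 2 * q + 8 < n)
    (c : ℕ → ℝ)
    (hc : ∀ m : ℕ, c m
      = ∫ t in Set.Ioi (0 : ℝ), (1 + (t - T) ^ 2) ^ ((5 + 2 * (m : ℝ) - (n : ℝ)) / 2)) :
    (1 + T ^ 2) * (((n : ℝ) - 2 * q - 7) / ((n : ℝ) - 2 * q - 8)) ≤ c (q + 1) / c q ∧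
    c (q + 1) / c q ≤ (1 + T ^ 2) * (((n : ℝ) - 2 * q - 6) / ((n : ℝ) - 2 * q - 8)) := by
  have hn9 : (2 * q + 9 : ℕ) ≤ n := hn
  have hn9' : (2 * (q:ℝ) + 9) ≤ (n:ℝ) := by exact_mod_cast hn9
  set α : ℝ := ((n:ℝ) - 5 - 2*q)/2 with hα_def
  have hα : 2 ≤ α := by rw [hα_def]; linarith
  have heq0 : (5 + 2 * ((q:ℕ) : ℝ) - (n:ℝ))/2 = -α := by rw [hα_def]; ring
  have heq1 : (5 + 2 * ((q+1 : ℕ) : ℝ) - (n:ℝ))/2 = 1 - α := by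
    push_cast; rw [hα_def]; ring
  set I0 : ℝ := ∫ t in Set.Ioi (0:ℝ), (1 + (t - T) ^ 2) ^ (-α) with hI0
  set I1 : ℝ := ∫ t in Set.Ioi (0:ℝ), (1 + (t - T) ^ 2) ^ (1 - α) with hI1
  have hcq : c q = I0 := by rw [hc q, hI0]; simp only [heq0]
  have hcq1 : c (q+1) = I1 := by rw [hc (q+1), hI1]; simp only [heq1]
  have hId := aux_id T α hT hα
  have hA := aux_A T α hT hα
  have hB := aux_B T α hT hα
  rw [← hI0] at hId hA hB
  rw [← hI1] at hId
  have hX : (0:ℝ) < (1 + T^2) ^ (1 - α) := Real.rpow_pos_of_pos (by positivity) _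
  have hA0 : (0:ℝ) < (-T) * (1 + T^2) ^ (1 - α) := mul_pos (by linarith) hX
  have hD0 : (0:ℝ) < 1 + (2*α - 1)*T^2 := by nlinarith [sq_nonneg T]
  have hI0pos : 0 < I0 := by
    rcases mul_pos_iff.mp (lt_of_lt_of_le hA0 hB) with ⟨_, h⟩ | ⟨h1, _⟩
    · exact h
    · linarith
  have h2a3 : (0:ℝ) < 2*α - 3 := by linarith
  -- derive (2α−2) T² I0 ≤ (−T) X
  have h1 : (2*(α-1))*(-T) * ((-T) * I0)
      ≤ (2*(α-1))*(-T) * ((1 + T^2) ^ (1 - α) / (2*(α-1))) :=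
    mul_le_mul_of_nonneg_left hA (by nlinarith)
  have h2 : (2*(α-1))*(-T) * ((1 + T^2) ^ (1 - α) / (2*(α-1)))
      = (-T) * (1 + T^2) ^ (1 - α) := by
    have hne : α - 1 ≠ 0 := by intro h; rw [sub_eq_zero] at h; linarith
    field_simp
  have h3 : (2*α-2)*T^2*I0 ≤ (-T) * (1 + T^2) ^ (1 - α) := by nlinarith [h1, h2]
  have low : (1 + T^2)*(2*α - 2)*I0 ≤ (2*α - 3)*I1 := by linarith [hId, h3]
  have up : (2*α - 3)*I1 ≤ (1 + T^2)*(2*α - 1)*I0 := by linarith [hId, hB]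
  have e7 : (n:ℝ) - 2*q - 7 = 2*α - 2 := by rw [hα_def]; ring
  have e8 : (n:ℝ) - 2*q - 8 = 2*α - 3 := by rw [hα_def]; ring
  have e6 : (n:ℝ) - 2*q - 6 = 2*α - 1 := by rw [hα_def]; ring
  rw [hcq, hcq1, e7, e8, e6]
  constructor
  · rw [le_div_iff₀ hI0pos,
      show (1 + T^2)*((2*α - 2)/(2*α - 3))*I0 = ((1 + T^2)*(2*α - 2)*I0)/(2*α - 3) by ring,
      div_le_iff₀ h2a3]
    linarith [low]
  · rw [div_le_iff₀ hI0pos,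
      show (1 + T^2)*((2*α - 1)/(2*α - 3))*I0 = ((1 + T^2)*(2*α - 1)*I0)/(2*α - 3) by ring,
      le_div_iff₀ h2a3]
    linarith [up]
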